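/- Fix β ∈ ℝ. Let I ⊆ (0, π) be an open interval and b : I → (0, ∞), α : I → ℝ functions such that for every a ∈ I: cosh(b(a)) = cos²a + sin²a · cosh β, and cos a = cosh(b(a)) · cos a − sinh(b(a)) · sin a · sinh(α(a)). Then α is differentiable on I with α′(a) = cosh(α(a)) · (1 − cosh(b(a))) / sinh(b(a)) for every a ∈ I. (This is the variation of the angle α of the isosceles time-like triangle, deformed among isosceles triangles with both equal sides of length a.) -/

import Mathlib

open Real Set

lemma aux13 (p q t S C : ℝ) (hp : 0 < p) (hq : 0 < q) (ht : 0 < t) (hS : 0 < S)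
    (hq2 : q ^ 2 = 2 + p ^ 2 * S ^ 2) (ht2 : t ^ 2 = 2 + p ^ 2) (hSC : S ^ 2 + C ^ 2 = 1) :
    t / q * (1 - (1 + p ^ 2 * S ^ 2)) / (S * (p * q)) =
      (t / q)⁻¹ * ((p * -S * q - p * C * (p ^ 2 * (2 * S ^ 1 * C) / (2 * q))) / q ^ 2) := by
  field_simp
  ring_nf
  linear_combination (-p^2*S^2) * ht2 + (p^2*S^2) * hq2
    + (p^4*S^2) * hSC

/-- Variation of the base angle of an isosceles time-like triangle in `AdS₃`, deformed
among isosceles triangles with both time-like edges of length `ia` and fixed apex angle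
`β`: one has `∂α/∂a = cosh α · (1 - cosh b) / sinh b`. -/
theorem stmt_13 (β : ℝ)
    (lo hi : ℝ) (hI : Ioo lo hi ⊆ Ioo 0 π)
    (b α : ℝ → ℝ)
    (hb : ∀ a ∈ Ioo lo hi, 0 < b a)
    (law1 : ∀ a ∈ Ioo lo hi, cosh (b a) = cos a ^ 2 + sin a ^ 2 * cosh β)
    (law2 : ∀ a ∈ Ioo lo hi, cos a = cosh (b a) * cos a - sinh (b a) * sin a * sinh (α a)) :
    ∀ a ∈ Ioo lo hi, HasDerivAt α (cosh (α a) * (1 - cosh (b a)) / sinh (b a)) a := by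
  intro a ha
  set s : ℝ := Real.cosh β - 1 with hs_def
  -- basic positivity at the point a
  have haI := hI ha
  have hsa : 0 < Real.sin a := Real.sin_pos_of_pos_of_lt_pi haI.1 haI.2
  have hcba : Real.cosh (b a) = 1 + s * Real.sin a ^ 2 := by
    have h1 := law1 a ha
    have h2 := Real.sin_sq_add_cos_sq a
    rw [hs_def]; nlinarith
  have hs : 0 < s := by
    have h1 : 1 < Real.cosh (b a) := Real.one_lt_cosh.mpr (ne_of_gt (hb a ha))
    nlinarith [sq_nonneg (Real.sin a)]
  -- key pointwise formula for α
  have key : ∀ x ∈ Ioo lo hi,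
      α x = Real.arsinh (Real.sqrt s * Real.cos x / Real.sqrt (2 + s * Real.sin x ^ 2)) := by
    intro x hx
    have hxI := hI hx
    have hsx : 0 < Real.sin x := Real.sin_pos_of_pos_of_lt_pi hxI.1 hxI.2
    have hwx : 0 < 2 + s * Real.sin x ^ 2 := by nlinarith [sq_nonneg (Real.sin x)]
    have hcbx : Real.cosh (b x) = 1 + s * Real.sin x ^ 2 := by
      have h1 := law1 x hx
      have h2 := Real.sin_sq_add_cos_sq x
      rw [hs_def]; nlinarith
    have hsinh_pos : 0 < Real.sinh (b x) := Real.sinh_pos_iff.mpr (hb x hx)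
    have hsq : Real.sinh (b x) ^ 2 = Real.sin x ^ 2 * (s * (2 + s * Real.sin x ^ 2)) := by
      have h3 := Real.cosh_sq (b x)
      nlinarith
    have hsinh_eq : Real.sinh (b x)
        = Real.sin x * (Real.sqrt s * Real.sqrt (2 + s * Real.sin x ^ 2)) := by
      have h4 : Real.sinh (b x) = Real.sqrt (Real.sinh (b x) ^ 2) :=
        (Real.sqrt_sq hsinh_pos.le).symm
      rw [h4, hsq, Real.sqrt_mul (sq_nonneg _), Real.sqrt_sq hsx.le,
        Real.sqrt_mul hs.le]
    have hps : 0 < Real.sqrt s := Real.sqrt_pos.mpr hs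
    have hpw : 0 < Real.sqrt (2 + s * Real.sin x ^ 2) := Real.sqrt_pos.mpr hwx
    have hss : Real.sqrt s * Real.sqrt s = s := Real.mul_self_sqrt hs.le
    have hsinh_alpha : Real.sinh (α x)
        = Real.sqrt s * Real.cos x / Real.sqrt (2 + s * Real.sin x ^ 2) := by
      have h5 := law2 x hx
      rw [hcbx, hsinh_eq] at h5
      have h6 : (Real.sin x ^ 2 * Real.sqrt s) *
          (Real.sqrt (2 + s * Real.sin x ^ 2) * Real.sinh (α x))
          = (Real.sin x ^ 2 * Real.sqrt s) * (Real.sqrt s * Real.cos x) := by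
        linear_combination h5 - Real.sin x ^ 2 * Real.cos x * hss
      have h7 := mul_left_cancel₀
        (by positivity : (Real.sin x ^ 2 * Real.sqrt s) ≠ 0) h6
      field_simp
      linear_combination h7
    rw [← Real.arsinh_sinh (α x), hsinh_alpha]
  -- derivative of the explicit function
  set S := Real.sin a with hS
  set C := Real.cos a with hC
  have hw : 0 < 2 + s * S ^ 2 := by nlinarith [sq_nonneg S]
  set p : ℝ := Real.sqrt s with hp_def
  set q : ℝ := Real.sqrt (2 + s * S ^ 2) with hq_def
  have hp : 0 < p := Real.sqrt_pos.mpr hs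
  have hq : 0 < q := Real.sqrt_pos.mpr hw
  have hp2 : p ^ 2 = s := Real.sq_sqrt hs.le
  have hq2 : q ^ 2 = 2 + s * S ^ 2 := Real.sq_sqrt hw.le
  -- inner function derivative
  have hu : HasDerivAt (fun x => Real.sqrt s * Real.cos x) (Real.sqrt s * (-Real.sin a)) a :=
    (Real.hasDerivAt_cos a).const_mul (Real.sqrt s)
  have hwd : HasDerivAt (fun x => 2 + s * Real.sin x ^ 2)
      (s * (2 * Real.sin a ^ 1 * Real.cos a)) a := by
    exact (((Real.hasDerivAt_sin a).pow 2).const_mul s).const_add 2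
  have hvne : (2 + s * Real.sin a ^ 2) ≠ 0 := by rw [← hS]; exact ne_of_gt hw
  have hv : HasDerivAt (fun x => Real.sqrt (2 + s * Real.sin x ^ 2))
      ((s * (2 * Real.sin a ^ 1 * Real.cos a)) / (2 * Real.sqrt (2 + s * Real.sin a ^ 2))) a :=
    hwd.sqrt hvne
  have hvne' : Real.sqrt (2 + s * Real.sin a ^ 2) ≠ 0 := by
    rw [← hS, ← hq_def]; exact ne_of_gt hq
  have hf : HasDerivAt (fun x => Real.sqrt s * Real.cos x / Real.sqrt (2 + s * Real.sin x ^ 2))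
      ((Real.sqrt s * (-Real.sin a) * Real.sqrt (2 + s * Real.sin a ^ 2)
        - Real.sqrt s * Real.cos a *
          ((s * (2 * Real.sin a ^ 1 * Real.cos a)) / (2 * Real.sqrt (2 + s * Real.sin a ^ 2))))
        / (Real.sqrt (2 + s * Real.sin a ^ 2)) ^ 2) a := hu.div hv hvne'
  have hg : HasDerivAt
      (fun x => Real.arsinh (Real.sqrt s * Real.cos x / Real.sqrt (2 + s * Real.sin x ^ 2)))
      ((Real.sqrt (1 + (Real.sqrt s * Real.cos a / Real.sqrt (2 + s * Real.sin a ^ 2)) ^ 2))⁻¹ •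
        ((Real.sqrt s * (-Real.sin a) * Real.sqrt (2 + s * Real.sin a ^ 2)
        - Real.sqrt s * Real.cos a *
          ((s * (2 * Real.sin a ^ 1 * Real.cos a)) / (2 * Real.sqrt (2 + s * Real.sin a ^ 2))))
        / (Real.sqrt (2 + s * Real.sin a ^ 2)) ^ 2)) a := hf.arsinh
  -- transfer to α via local equality
  have heq : α =ᶠ[nhds a]
      (fun x => Real.arsinh (Real.sqrt s * Real.cos x / Real.sqrt (2 + s * Real.sin x ^ 2))) :=
    Filter.eventually_of_mem (Ioo_mem_nhds ha.1 ha.2) key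
  have halpha : HasDerivAt α
      ((Real.sqrt (1 + (Real.sqrt s * Real.cos a / Real.sqrt (2 + s * Real.sin a ^ 2)) ^ 2))⁻¹ •
        ((Real.sqrt s * (-Real.sin a) * Real.sqrt (2 + s * Real.sin a ^ 2)
        - Real.sqrt s * Real.cos a *
          ((s * (2 * Real.sin a ^ 1 * Real.cos a)) / (2 * Real.sqrt (2 + s * Real.sin a ^ 2))))
        / (Real.sqrt (2 + s * Real.sin a ^ 2)) ^ 2)) a := hg.congr_of_eventuallyEq heq
  convert halpha using 1
  -- now prove equality of the two derivative expressions
  have halpha_eq := key a ha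
  have hsinhb_pos : 0 < Real.sinh (b a) := Real.sinh_pos_iff.mpr (hb a ha)
  have hsqb : Real.sinh (b a) ^ 2 = S ^ 2 * (s * (2 + s * S ^ 2)) := by
    have h3 := Real.cosh_sq (b a)
    nlinarith [hcba]
  have hsinhb_eq : Real.sinh (b a) = S * (p * q) := by
    have h4 : Real.sinh (b a) = Real.sqrt (Real.sinh (b a) ^ 2) :=
      (Real.sqrt_sq hsinhb_pos.le).symm
    rw [h4, hsqb, Real.sqrt_mul (sq_nonneg _), Real.sqrt_sq hsa.le,
      Real.sqrt_mul hs.le]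
  have hcosh_alpha : Real.cosh (α a)
      = Real.sqrt (1 + (p * C / q) ^ 2) := by
    rw [halpha_eq]; exact Real.cosh_arsinh _
  set t : ℝ := Real.sqrt (2 + s) with ht_def
  have hts : 0 < 2 + s := by linarith
  have ht : 0 < t := Real.sqrt_pos.mpr hts
  have ht2 : t ^ 2 = 2 + s := Real.sq_sqrt hts.le
  have h1f : Real.sqrt (1 + (p * C / q) ^ 2) = t / q := by
    have hSC : S ^ 2 + C ^ 2 = 1 := Real.sin_sq_add_cos_sq a
    have hval : 1 + (p * C / q) ^ 2 = (2 + s) / q ^ 2 := by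
      field_simp
      nlinarith [hp2, hq2]
    rw [hval, Real.sqrt_div hts.le, Real.sqrt_sq hq.le]
  have hSC : S ^ 2 + C ^ 2 = 1 := Real.sin_sq_add_cos_sq a
  rw [← hS, ← hC, ← hp_def, ← hq_def, hcosh_alpha, h1f, hcba, hsinhb_eq, smul_eq_mul, ← hp2]
  have hq2' : q ^ 2 = 2 + p ^ 2 * S ^ 2 := by rw [hq2, hp2]
  have ht2' : t ^ 2 = 2 + p ^ 2 := by rw [ht2, hp2]
  exact aux13 p q t S C hp hq ht hsa hq2' ht2' hSC
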